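/- For $z_1, z_2$ with $0 < |z_1|, |z_2| \leq e^{-1}$, the inequality $\frac{4}{\pi} h_{\mathbb{D}^*}(z_1, z_2) \leq D(z_1, z_2)$ holds, where $h_{\mathbb{D}^*}$ is the hyperbolic distance of the punctured unit disk $\mathbb{D}^* = \{0 < |z| < 1\}$ with density $\lambda_{\mathbb{D}^*}(z) = \frac{1}{2|z|\log(1/|z|)}$, and $D(z_1,z_2) = \frac{2\sin(\theta/2)}{\max\{\log(1/|z_1|),\log(1/|z_2|)\}} + |\log\log(1/|z_2|) - \log\log(1/|z_1|)|$ with $\theta = |\arg(z_2/z_1)| \in [0,\pi]$. -/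

import Mathlib

open Real

/-- The inverse hyperbolic tangent, `arth t = (1/2) log ((1+t)/(1-t))`. -/
noncomputable def arth (t : ℝ) : ℝ := Real.log ((1 + t) / (1 - t)) / 2

/-- The hyperbolic distance of the punctured unit disk `𝔻* = {0 < |z| < 1}`
(with density `λ(z) = 1/(2|z| log(1/|z|))`), computed via the covering
`ζ ↦ exp (π i ζ)`:  `h(z₁,z₂) = arth √((θ² + (τ₁-τ₂)²)/(θ² + (τ₁+τ₂)²))`
where `τⱼ = log (1/|zⱼ|)` and `θ = |arg (z₂/z₁)| ∈ [0,π]`. -/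
noncomputable def hDstar (z₁ z₂ : ℂ) : ℝ :=
  arth (Real.sqrt
    ((|Complex.arg (z₂ / z₁)| ^ 2 +
        (Real.log (1 / ‖z₁‖) - Real.log (1 / ‖z₂‖)) ^ 2) /
      (|Complex.arg (z₂ / z₁)| ^ 2 +
        (Real.log (1 / ‖z₁‖) + Real.log (1 / ‖z₂‖)) ^ 2)))

/-- The distance function `D` on the punctured disk `0 < |z| ≤ e⁻¹`. -/
noncomputable def D (z₁ z₂ : ℂ) : ℝ :=
  2 * Real.sin (|Complex.arg (z₂ / z₁)| / 2) /
      max (Real.log (1 / ‖z₁‖)) (Real.log (1 / ‖z₂‖)) +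
    |Real.log (Real.log (1 / ‖z₂‖)) - Real.log (Real.log (1 / ‖z₁‖))|

open UpperHalfPlane
open scoped UpperHalfPlane

lemma arth_div_sqrt (a : ℝ) (ha : 0 ≤ a) :
    arth (a / Real.sqrt (1 + a ^ 2)) = Real.arsinh a := by
  set c := Real.sqrt (1 + a ^ 2) with hc
  have hc2 : c ^ 2 = 1 + a ^ 2 := Real.sq_sqrt (by positivity)
  have hca : a < c := by nlinarith [Real.sqrt_nonneg (1 + a^2)]
  have hc0 : 0 < c := lt_of_le_of_lt ha hca
  have hne : 1 - a / c ≠ 0 := by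
    have : a / c < 1 := (div_lt_one hc0).2 hca
    linarith
  have hne' : c - a ≠ 0 := sub_ne_zero.2 hca.ne'
  have h1 : (1 + a / c) / (1 - a / c) = (c + a) ^ 2 := by
    field_simp
    nlinarith [sq_nonneg (c + a)]
  rw [arth, h1, Real.log_pow]
  rw [Real.arsinh, add_comm]
  push_cast
  ring

lemma arsinh_le_self {t : ℝ} (ht : 0 ≤ t) : Real.arsinh t ≤ t := by
  nth_rewrite 2 [← Real.arsinh_sinh t]
  exact Real.arsinh_le_arsinh.2 (Real.self_le_sinh_iff.2 ht)

lemma two_arsinh_eq_log {a b : ℝ} (ha : 0 < a) (hab : a ≤ b) :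
    2 * Real.arsinh ((b - a) / (2 * Real.sqrt (a * b))) = Real.log b - Real.log a := by
  have hb : 0 < b := lt_of_lt_of_le ha hab
  have hs : 0 < Real.sqrt (a * b) := Real.sqrt_pos.2 (by positivity)
  set x := (b - a) / (2 * Real.sqrt (a * b)) with hx
  have hsq : Real.sqrt (a*b) ^ 2 = a * b := Real.sq_sqrt (by positivity)
  have h1 : 1 + x ^ 2 = ((b + a) / (2 * Real.sqrt (a * b))) ^ 2 := by
    have hab2 : (Real.sqrt a * Real.sqrt b) ^ 2 = a * b := by
      rw [mul_pow, Real.sq_sqrt ha.le, Real.sq_sqrt hb.le]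
    rw [hx, div_pow, div_pow, mul_pow, hsq, add_div' _ _ _ (by positivity)]
    congr 1
    ring
  have h2 : Real.sqrt (1 + x ^ 2) = (b + a) / (2 * Real.sqrt (a * b)) := by
    rw [h1]; exact Real.sqrt_sq (by positivity)
  have key : b / Real.sqrt (a * b) = Real.sqrt (b / a) := by
    rw [← Real.sqrt_sq hb.le, ← Real.sqrt_div (sq_nonneg b)]
    congr 1
    field_simp
    ring
    rw [Real.sq_sqrt (sq_nonneg b)]
  have h3 : x + Real.sqrt (1 + x ^ 2) = Real.sqrt (b / a) := by
    rw [h2, hx, ← add_div]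
    have e : b - a + (b + a) = 2 * b := by ring
    rw [e, mul_div_mul_left _ _ (two_ne_zero), key]
  rw [Real.arsinh, h3, Real.log_sqrt (by positivity), Real.log_div hb.ne' ha.ne']
  ring

lemma uhp_dist_mk (a b x y : ℝ) (hx : 0 < x) (hy : 0 < y) :
    dist (UpperHalfPlane.mk ⟨a, x⟩ hx) (UpperHalfPlane.mk ⟨b, y⟩ hy)
      = 2 * Real.arsinh (Real.sqrt ((a - b) ^ 2 + (x - y) ^ 2) / (2 * Real.sqrt (x * y))) := by
  rw [UpperHalfPlane.dist_eq]
  have h0 : ((⟨a, x⟩ : ℂ) - (⟨b, y⟩ : ℂ)) = (⟨a - b, x - y⟩ : ℂ) := by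
    apply Complex.ext <;> simp
  have h1 : dist ((UpperHalfPlane.mk ⟨a, x⟩ hx : ℍ) : ℂ) ((UpperHalfPlane.mk ⟨b, y⟩ hy : ℍ) : ℂ)
      = Real.sqrt ((a - b) ^ 2 + (x - y) ^ 2) := by
    rw [Complex.dist_eq, UpperHalfPlane.coe_mk, UpperHalfPlane.coe_mk, h0,
      Complex.norm_def, Complex.normSq_apply]
    congr 1
    ring
  rw [h1]
  simp [UpperHalfPlane.mk_im]

lemma arth_eq_arsinh (θ τ₁ τ₂ : ℝ) (hθ : 0 ≤ θ) (h1 : 0 < τ₁) (h2 : 0 < τ₂) :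
    arth (Real.sqrt ((θ ^ 2 + (τ₁ - τ₂) ^ 2) / (θ ^ 2 + (τ₁ + τ₂) ^ 2)))
      = Real.arsinh (Real.sqrt (θ ^ 2 + (τ₁ - τ₂) ^ 2) / (2 * Real.sqrt (τ₁ * τ₂))) := by
  set A := θ ^ 2 + (τ₁ - τ₂) ^ 2 with hA
  set B := θ ^ 2 + (τ₁ + τ₂) ^ 2 with hB
  have hA0 : 0 ≤ A := by positivity
  have hp : 0 < τ₁ * τ₂ := by positivity
  have hBA : B = A + 4 * (τ₁ * τ₂) := by rw [hA, hB]; ring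
  have hB0 : 0 < B := by nlinarith
  set a := Real.sqrt A / (2 * Real.sqrt (τ₁ * τ₂)) with ha
  have hsp : 0 < Real.sqrt (τ₁ * τ₂) := Real.sqrt_pos.2 hp
  have ha0 : 0 ≤ a := by positivity
  have ha2 : a ^ 2 = A / (4 * (τ₁ * τ₂)) := by
    rw [ha, div_pow, mul_pow, Real.sq_sqrt hA0, Real.sq_sqrt hp.le]
    norm_num
  have h1a : 1 + a ^ 2 = B / (4 * (τ₁ * τ₂)) := by
    rw [ha2, hBA]; field_simp; ring
  have hsqB : Real.sqrt (1 + a ^ 2) = Real.sqrt B / (2 * Real.sqrt (τ₁ * τ₂)) := by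
    rw [h1a, Real.sqrt_div hB0.le]
    congr 1
    rw [show (4 : ℝ) * (τ₁ * τ₂) = (2 * Real.sqrt (τ₁ * τ₂)) ^ 2 by
      rw [mul_pow, Real.sq_sqrt hp.le]; ring]
    exact Real.sqrt_sq (by positivity)
  have key : Real.sqrt (A / B) = a / Real.sqrt (1 + a ^ 2) := by
    have hsB : 0 < Real.sqrt B := Real.sqrt_pos.2 hB0
    rw [hsqB, ha, Real.sqrt_div hA0]
    field_simp
  rw [key, arth_div_sqrt a ha0]

theorem stmt_10 (z₁ z₂ : ℂ) (h₁ : 0 < ‖z₁‖) (h₁' : ‖z₁‖ ≤ Real.exp (-1))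
    (h₂ : 0 < ‖z₂‖) (h₂' : ‖z₂‖ ≤ Real.exp (-1)) :
    4 / π * hDstar z₁ z₂ ≤ D z₁ z₂ := by
  have hπ : 0 < π := Real.pi_pos
  simp only [hDstar, D]
  set θ := |Complex.arg (z₂ / z₁)| with hθdef
  set τ₁ := Real.log (1 / ‖z₁‖) with hτ₁def
  set τ₂ := Real.log (1 / ‖z₂‖) with hτ₂def
  have hθ0 : 0 ≤ θ := abs_nonneg _
  have hθπ : θ ≤ π := Complex.abs_arg_le_pi _
  have ht1 : 1 ≤ τ₁ := by
    rw [hτ₁def, one_div, Real.log_inv]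
    have := Real.log_le_log h₁ h₁'
    rw [Real.log_exp] at this
    linarith
  have ht2 : 1 ≤ τ₂ := by
    rw [hτ₂def, one_div, Real.log_inv]
    have := Real.log_le_log h₂ h₂'
    rw [Real.log_exp] at this
    linarith
  have h1p : 0 < τ₁ := by linarith
  have h2p : 0 < τ₂ := by linarith
  set m := max τ₁ τ₂ with hm
  have hm1 : 1 ≤ m := le_trans ht1 (le_max_left _ _)
  have hmp : 0 < m := by linarith
  have hmτ₁ : τ₁ ≤ m := le_max_left _ _
  have hmτ₂ : τ₂ ≤ m := le_max_right _ _
  -- points in the upper half-plane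
  set w₁ : ℍ := UpperHalfPlane.mk ⟨0, τ₁⟩ h1p with hw₁
  set u : ℍ := UpperHalfPlane.mk ⟨0, m⟩ hmp with hu
  set v : ℍ := UpperHalfPlane.mk ⟨θ, m⟩ hmp with hv
  set w₂ : ℍ := UpperHalfPlane.mk ⟨θ, τ₂⟩ h2p with hw₂
  have hd : arth (Real.sqrt ((θ ^ 2 + (τ₁ - τ₂) ^ 2) / (θ ^ 2 + (τ₁ + τ₂) ^ 2)))
      = dist w₁ w₂ / 2 := by
    rw [hw₁, hw₂, uhp_dist_mk, arth_eq_arsinh θ τ₁ τ₂ hθ0 h1p h2p]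
    rw [show (0 - θ) ^ 2 + (τ₁ - τ₂) ^ 2 = θ ^ 2 + (τ₁ - τ₂) ^ 2 by ring]
    ring
  have dA : dist w₁ u = Real.log m - Real.log τ₁ := by
    rw [hw₁, hu, uhp_dist_mk,
      show (0 - 0 : ℝ) ^ 2 + (τ₁ - m) ^ 2 = (m - τ₁) ^ 2 by ring,
      Real.sqrt_sq (by linarith), two_arsinh_eq_log h1p hmτ₁]
  have dC : dist v w₂ = Real.log m - Real.log τ₂ := by
    rw [hv, hw₂, uhp_dist_mk,
      show (θ - θ) ^ 2 + (m - τ₂) ^ 2 = (m - τ₂) ^ 2 by ring,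
      Real.sqrt_sq (by linarith), mul_comm m τ₂, two_arsinh_eq_log h2p hmτ₂]
  have dB : dist u v = 2 * Real.arsinh (θ / (2 * m)) := by
    rw [hu, hv, uhp_dist_mk,
      show (0 - θ) ^ 2 + (m - m) ^ 2 = θ ^ 2 by ring, Real.sqrt_sq hθ0,
      Real.sqrt_mul_self hmp.le]
  have tri : dist w₁ w₂ ≤ (Real.log m - Real.log τ₁) + (Real.log m - Real.log τ₂)
      + 2 * Real.arsinh (θ / (2 * m)) := by
    calc dist w₁ w₂ ≤ dist w₁ u + dist u v + dist v w₂ := dist_triangle4 w₁ u v w₂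
    _ = (Real.log m - Real.log τ₁) + (Real.log m - Real.log τ₂)
        + 2 * Real.arsinh (θ / (2 * m)) := by rw [dA, dB, dC]; ring
  have hlog : (Real.log m - Real.log τ₁) + (Real.log m - Real.log τ₂)
      = |Real.log τ₂ - Real.log τ₁| := by
    rcases max_cases τ₁ τ₂ with ⟨he, hle⟩ | ⟨he, hlt⟩
    · rw [hm, he, abs_of_nonpos (by
        have := Real.log_le_log h2p hle
        linarith)]
      ring
    · rw [hm, he, abs_of_nonneg (by
        have := Real.log_le_log h1p hlt.le
        linarith)]
      ring
  have harsinh : 2 * Real.arsinh (θ / (2 * m)) ≤ θ / m := by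
    have := arsinh_le_self (t := θ / (2 * m)) (by positivity)
    rw [show θ / m = 2 * (θ / (2 * m)) by field_simp]
    linarith
  have hsin : θ / π ≤ Real.sin (θ / 2) := by
    have := Real.mul_le_sin (x := θ / 2) (by linarith) (by linarith)
    calc θ / π = 2 / π * (θ / 2) := by field_simp
    _ ≤ Real.sin (θ / 2) := this
  have step : dist w₁ w₂ ≤ |Real.log τ₂ - Real.log τ₁| + θ / m := by
    calc dist w₁ w₂ ≤ _ := tri
    _ ≤ |Real.log τ₂ - Real.log τ₁| + θ / m := by rw [hlog]; linarith
  rw [hd]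
  have habs : (0:ℝ) ≤ |Real.log τ₂ - Real.log τ₁| := abs_nonneg _
  have h2π : 2 ≤ π := by linarith [Real.pi_gt_three]
  calc 4 / π * (dist w₁ w₂ / 2) = 2 / π * dist w₁ w₂ := by ring
  _ ≤ 2 / π * (|Real.log τ₂ - Real.log τ₁| + θ / m) := by
      apply mul_le_mul_of_nonneg_left step (by positivity)
  _ = 2 / π * |Real.log τ₂ - Real.log τ₁| + 2 / m * (θ / π) := by field_simp
  _ ≤ |Real.log τ₂ - Real.log τ₁| + 2 / m * Real.sin (θ / 2) := by
      have e1 : 2 / π * |Real.log τ₂ - Real.log τ₁| ≤ |Real.log τ₂ - Real.log τ₁| := by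
        apply mul_le_of_le_one_left habs
        rw [div_le_one hπ]; linarith
      have e2 : 2 / m * (θ / π) ≤ 2 / m * Real.sin (θ / 2) :=
        mul_le_mul_of_nonneg_left hsin (by positivity)
      linarith
  _ = 2 * Real.sin (θ / 2) / m + |Real.log τ₂ - Real.log τ₁| := by ring
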